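/- For each integer k ≥ 0, let P_k(x) = −Σ_{j=0}^{⌊(k-1)/2⌋} (-4x)^j / (2^{2k-1}·(2j+1)!) · C(2k-2j-1,k) and Q_k(x) = Σ_{j=0}^{⌊k/2⌋} (-4x)^j / (2^{2k}·(2j)!) · C(2k-2j,k), as polynomials over ℚ. Then P_0 = 0, Q_0 = 1, and for every k ≥ 0 these polynomials satisfy the recurrences (k+1)·P_{k+1}(x) = k·P_k(x) − x·P_k'(x) − (1/2)·Q_k(x) and (k+1)·Q_{k+1}(x) = ((2k+1)/2)·Q_k(x) − x·Q_k'(x) + (x/2)·P_k(x). -/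
import Mathlib


open Finset Polynomial

/-- The polynomial `P_k(x) = -∑_{j=0}^{⌊(k-1)/2⌋} (-4x)^j / (2^{2k-1} (2j+1)!) · C(2k-2j-1, k)`
over `ℚ`.  (The sum has `⌊(k+1)/2⌋` terms; it is empty for `k = 0`.) -/
noncomputable def P (k : ℕ) : Polynomial ℚ :=
  -∑ j ∈ Finset.range ((k + 1) / 2),
    Polynomial.C ((-4 : ℚ) ^ j / (2 ^ (2 * k - 1) * (Nat.factorial (2 * j + 1)))
        * (Nat.choose (2 * k - 2 * j - 1) k))
      * Polynomial.X ^ j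

/-- The polynomial `Q_k(x) = ∑_{j=0}^{⌊k/2⌋} (-4x)^j / (2^{2k} (2j)!) · C(2k-2j, k)` over `ℚ`. -/
noncomputable def Q (k : ℕ) : Polynomial ℚ :=
  ∑ j ∈ Finset.range (k / 2 + 1),
    Polynomial.C ((-4 : ℚ) ^ j / (2 ^ (2 * k) * (Nat.factorial (2 * j)))
        * (Nat.choose (2 * k - 2 * j) k))
      * Polynomial.X ^ j

lemma fcast (a b : ℕ) : ((a+b).factorial : ℚ)
    = (∏ i ∈ Finset.range b, ((a:ℚ)+i+1)) * (a.factorial : ℚ) := by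
  induction b with
  | zero => simp
  | succ m ih =>
      rw [show a+(m+1) = (a+m)+1 by ring, Nat.factorial_succ, Finset.prod_range_succ]
      push_cast
      rw [ih]; ring

lemma cmf (a b : ℕ) (h : a ≤ b) :
    ((b.choose a : ℚ)) * ((a.factorial : ℚ) * ((b-a).factorial : ℚ)) = (b.factorial : ℚ) := by
  have := Nat.choose_mul_factorial_mul_factorial h
  rw [← mul_assoc]
  exact_mod_cast congrArg (Nat.cast : ℕ → ℚ) this

lemma keyA (k n : ℕ) (h : 2*n ≤ k) :
    ((k:ℚ)+1) * ((2*k+1-2*n).choose (k+1) : ℚ)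
      = 4*((k:ℚ)-n) * ((2*k-2*n-1).choose k : ℚ) + (2*(n:ℚ)+1) * ((2*k-2*n).choose k : ℚ) := by
  obtain ⟨s, rfl⟩ : ∃ s, k = 2*n + s := ⟨k - 2*n, by omega⟩
  rcases s with _ | t
  · rcases n with _ | m
    · norm_num
    · rw [Nat.choose_eq_zero_of_lt (show 2*(2*(m+1)+0)-2*(m+1)-1 < 2*(m+1)+0 by omega),
          show 2*(2*(m+1)+0)+1-2*(m+1) = 2*(m+1)+1 by omega,
          show 2*(2*(m+1)+0)-2*(m+1) = 2*(m+1) by omega,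
          show 2*(m+1)+0+1 = 2*(m+1)+1 by omega, show 2*(m+1)+0 = 2*(m+1) by omega,
          Nat.choose_self, Nat.choose_self]
      push_cast; ring
  · rw [show 2*(2*n+(t+1))+1-2*n = (2*n+2*t)+3 by omega, show 2*n+(t+1)+1 = (2*n+t)+2 by omega,
        show 2*(2*n+(t+1))-2*n-1 = (2*n+2*t)+1 by omega,
        show 2*(2*n+(t+1))-2*n = (2*n+2*t)+2 by omega,
        show (2*n+(t+1)) = (2*n+t)+1 by omega]
    have e1 := cmf ((2*n+t)+2) ((2*n+2*t)+3) (by omega)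
    have e2 := cmf ((2*n+t)+1) ((2*n+2*t)+1) (by omega)
    have e3 := cmf ((2*n+t)+1) ((2*n+2*t)+2) (by omega)
    rw [show (2*n+2*t)+3-((2*n+t)+2) = t+1 by omega] at e1
    rw [show (2*n+2*t)+1-((2*n+t)+1) = t+0 by omega] at e2
    rw [show (2*n+2*t)+2-((2*n+t)+1) = t+1 by omega] at e3
    rw [fcast (2*n+2*t) 3, fcast (2*n+t) 2, fcast t 1] at e1
    rw [fcast (2*n+2*t) 1, fcast (2*n+t) 1, fcast t 0] at e2
    rw [fcast (2*n+2*t) 2, fcast (2*n+t) 1, fcast t 1] at e3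
    simp only [Finset.prod_range_succ, Finset.prod_range_zero] at e1 e2 e3
    push_cast at e1 e2 e3 ⊢
    apply mul_right_cancel₀ (b := (2*(n:ℚ)+(t:ℚ)+2)*(2*(n:ℚ)+(t:ℚ)+1)*((2*n+t).factorial : ℚ)
        *(((t:ℚ)+1)*((t.factorial : ℚ)))) (by positivity)
    linear_combination (2*(n:ℚ)+(t:ℚ)+2) * e1
      - (4*((n:ℚ)+(t:ℚ)+1)*(2*(n:ℚ)+(t:ℚ)+2)*((t:ℚ)+1)) * e2
      - ((2*(n:ℚ)+1)*(2*(n:ℚ)+(t:ℚ)+2)) * e3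

lemma keyB (k n : ℕ) (h : 2*n ≤ k) :
    ((k:ℚ)+1) * ((2*k+2-2*n).choose (k+1) : ℚ)
      = 2*(2*(k:ℚ)+1-2*n) * ((2*k-2*n).choose k : ℚ) + 2*(n:ℚ) * ((2*k+1-2*n).choose k : ℚ) := by
  obtain ⟨s, rfl⟩ : ∃ s, k = 2*n + s := ⟨k - 2*n, by omega⟩
  rw [show 2*(2*n+s)+2-2*n = (2*n+2*s)+2 by omega, show 2*n+s+1 = (2*n+s)+1 by omega,
      show 2*(2*n+s)-2*n = 2*n+2*s by omega,
      show 2*(2*n+s)+1-2*n = (2*n+2*s)+1 by omega]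
  have e1 := cmf ((2*n+s)+1) ((2*n+2*s)+2) (by omega)
  have e2 := cmf (2*n+s) (2*n+2*s) (by omega)
  have e3 := cmf (2*n+s) ((2*n+2*s)+1) (by omega)
  rw [show (2*n+2*s)+2-((2*n+s)+1) = s+1 by omega] at e1
  rw [show (2*n+2*s)-(2*n+s) = s+0 by omega] at e2
  rw [show (2*n+2*s)+1-(2*n+s) = s+1 by omega] at e3
  rw [fcast (2*n+2*s) 2, fcast (2*n+s) 1, fcast s 1] at e1
  rw [fcast s 0] at e2
  rw [fcast (2*n+2*s) 1, fcast s 1] at e3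
  simp only [Finset.prod_range_succ, Finset.prod_range_zero] at e1 e2 e3
  push_cast at e1 e2 e3 ⊢
  apply mul_right_cancel₀ (b := (2*(n:ℚ)+(s:ℚ)+1)*((2*n+s).factorial : ℚ)
      *(((s:ℚ)+1)*((s.factorial : ℚ)))) (by positivity)
  linear_combination (2*(n:ℚ)+(s:ℚ)+1) * e1
    - (2*(2*(n:ℚ)+2*(s:ℚ)+1)*(2*(n:ℚ)+(s:ℚ)+1)*((s:ℚ)+1)) * e2
    - (2*(n:ℚ)*(2*(n:ℚ)+(s:ℚ)+1)) * e3
lemma coeff_P (k n : ℕ) :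
    (P k).coeff n = if 2*n < k then
      -((-4:ℚ)^n / (2^(2*k-1) * ((2*n+1).factorial : ℚ)) * (((2*k-2*n-1).choose k : ℚ))) else 0 := by
  rw [P, Polynomial.coeff_neg, Polynomial.finset_sum_coeff]
  rw [Finset.sum_congr rfl (fun b _ => by
    rw [Polynomial.coeff_C_mul, Polynomial.coeff_X_pow, mul_ite, mul_one, mul_zero])]
  rw [Finset.sum_ite_eq (Finset.range ((k+1)/2)) n]
  have hiff : n ∈ Finset.range ((k+1)/2) ↔ 2*n < k := by
    simp only [Finset.mem_range]; omega
  simp only [hiff]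
  split_ifs <;> simp

lemma coeff_Q (k n : ℕ) :
    (Q k).coeff n = if 2*n ≤ k then
      (-4:ℚ)^n / (2^(2*k) * ((2*n).factorial : ℚ)) * (((2*k-2*n).choose k : ℚ)) else 0 := by
  rw [Q, Polynomial.finset_sum_coeff]
  rw [Finset.sum_congr rfl (fun b _ => by
    rw [Polynomial.coeff_C_mul, Polynomial.coeff_X_pow, mul_ite, mul_one, mul_zero])]
  rw [Finset.sum_ite_eq (Finset.range (k/2+1)) n]
  have hiff : n ∈ Finset.range (k/2+1) ↔ 2*n ≤ k := by
    simp only [Finset.mem_range]; omega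
  simp only [hiff]

lemma coeff_X_mul_deriv (p : Polynomial ℚ) (n : ℕ) :
    (X * derivative p).coeff n = p.coeff n * n := by
  cases n with
  | zero => simp
  | succ m => rw [Polynomial.coeff_X_mul, Polynomial.coeff_derivative]; push_cast; ring

theorem P_Q_recurrence :
    P 0 = 0 ∧ Q 0 = 1 ∧
      ∀ k : ℕ,
        Polynomial.C ((k : ℚ) + 1) * P (k + 1)
            = Polynomial.C (k : ℚ) * P k - Polynomial.X * Polynomial.derivative (P k)
              - Polynomial.C (1 / 2 : ℚ) * Q k
          ∧ Polynomial.C ((k : ℚ) + 1) * Q (k + 1)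
            = Polynomial.C ((2 * (k : ℚ) + 1) / 2) * Q k
              - Polynomial.X * Polynomial.derivative (Q k)
              + Polynomial.C (1 / 2 : ℚ) * Polynomial.X * P k := by
  refine ⟨by simp [P], ?_, fun k => ⟨?_, ?_⟩⟩
  · rw [Q]; norm_num
  · -- first recurrence
    ext n
    rw [Polynomial.coeff_C_mul, Polynomial.coeff_sub, Polynomial.coeff_sub,
        Polynomial.coeff_C_mul, coeff_X_mul_deriv, Polynomial.coeff_C_mul,
        coeff_P, coeff_P, coeff_Q]
    have fe : ((2*n+1).factorial : ℚ) = (2*(n:ℚ)+1) * ((2*n).factorial : ℚ) := by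
      rw [Nat.factorial_succ]; push_cast; ring
    have hne1 : ((2*n).factorial : ℚ) ≠ 0 := by positivity
    have hne3 : (2*(n:ℚ)+1) ≠ 0 := by positivity
    by_cases h2 : 2*n < k
    · rw [if_pos (show 2*n < k+1 by omega), if_pos h2, if_pos (show 2*n ≤ k by omega)]
      have pe1 : (2:ℚ)^(2*(k+1)-1) = 2^(2*k-1)*4 := by
        conv_lhs => rw [show 2*(k+1)-1 = (2*k-1)+2 by omega]
        rw [pow_add]; norm_num
      have pe2 : (2:ℚ)^(2*k) = 2^(2*k-1)*2 := by
        conv_lhs => rw [show 2*k = (2*k-1)+1 by omega]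
        rw [pow_succ]
      have hA : (((2*(k+1)-2*n-1).choose (k+1)) : ℚ)
          = (4*((k:ℚ)-n) * (((2*k-2*n-1).choose k : ℚ))
              + (2*(n:ℚ)+1) * (((2*k-2*n).choose k : ℚ)))/((k:ℚ)+1) := by
        rw [eq_div_iff (by positivity), show 2*(k+1)-2*n-1 = 2*k+1-2*n by omega]
        linear_combination keyA k n (by omega)
      rw [hA, pe1, pe2, fe]
      field_simp
      try ring
    · by_cases h3 : 2*n ≤ k
      · -- 2n = k
        rw [if_pos (show 2*n < k+1 by omega), if_neg h2, if_pos h3]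
        rcases Nat.eq_zero_or_pos k with hk0 | hkpos
        · have hn0 : n = 0 := by omega
          subst hk0; subst hn0
          norm_num [Nat.factorial]
        · have pe1 : (2:ℚ)^(2*(k+1)-1) = 2^(2*k-1)*4 := by
            conv_lhs => rw [show 2*(k+1)-1 = (2*k-1)+2 by omega]
            rw [pow_add]; norm_num
          have pe2 : (2:ℚ)^(2*k) = 2^(2*k-1)*2 := by
            conv_lhs => rw [show 2*k = (2*k-1)+1 by omega]
            rw [pow_succ]
          have hv : (2*k-2*n-1).choose k = 0 := Nat.choose_eq_zero_of_lt (by omega)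
          have hkey := keyA k n (by omega)
          rw [hv] at hkey
          push_cast at hkey
          have hA : (((2*(k+1)-2*n-1).choose (k+1)) : ℚ)
              = ((2*(n:ℚ)+1) * (((2*k-2*n).choose k : ℚ)))/((k:ℚ)+1) := by
            rw [eq_div_iff (by positivity), show 2*(k+1)-2*n-1 = 2*k+1-2*n by omega]
            linear_combination hkey
          rw [hA, pe1, pe2, fe]
          field_simp
          try ring
      · rw [if_neg (show ¬ 2*n < k+1 by omega), if_neg h2, if_neg h3]; ring
  · -- second recurrence
    ext n
    rw [Polynomial.coeff_C_mul, Polynomial.coeff_add, Polynomial.coeff_sub,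
        Polynomial.coeff_C_mul, coeff_X_mul_deriv, mul_assoc, Polynomial.coeff_C_mul]
    rcases n with _ | m
    · have hx : (X * (P k)).coeff 0 = 0 := by simp
      rw [hx, coeff_Q, coeff_Q, if_pos (show 2*0 ≤ k+1 by omega), if_pos (show 2*0 ≤ k by omega)]
      have pe0 : (2:ℚ)^(2*(k+1)) = 2^(2*k)*4 := by
        conv_lhs => rw [show 2*(k+1) = (2*k)+2 by omega]
        rw [pow_add]; norm_num
      have hA : (((2*(k+1)-2*0).choose (k+1)) : ℚ)
          = (2*(2*(k:ℚ)+1-2*((0:ℕ):ℚ)) * (((2*k-2*0).choose k : ℚ))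
              + 2*((0:ℕ):ℚ) * (((2*k+1-2*0).choose k : ℚ)))/((k:ℚ)+1) := by
        rw [eq_div_iff (by positivity), show 2*(k+1)-2*0 = 2*k+2-2*0 by omega]
        linear_combination keyB k 0 (by omega)
      rw [hA, pe0]
      have hne1 : ((2*0).factorial : ℚ) ≠ 0 := by positivity
      have hne2 : (2:ℚ)^(2*k) ≠ 0 := by positivity
      have hk1 : ((k:ℚ)+1) ≠ 0 := by positivity
      push_cast
      field_simp
      try ring
    · rw [Polynomial.coeff_X_mul, coeff_P, coeff_Q, coeff_Q]
      have fe2 : ((2*(m+1)).factorial : ℚ) = (2*(m:ℚ)+2) * ((2*m+1).factorial : ℚ) := by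
        rw [show 2*(m+1) = (2*m+1)+1 by omega, Nat.factorial_succ]; push_cast; ring
      have hne1 : ((2*m+1).factorial : ℚ) ≠ 0 := by positivity
      have hne3 : (2*(m:ℚ)+2) ≠ 0 := by positivity
      have hk1 : ((k:ℚ)+1) ≠ 0 := by positivity
      by_cases h2 : 2*(m+1) ≤ k
      · rw [if_pos (show 2*(m+1) ≤ k+1 by omega), if_pos h2, if_pos (show 2*m < k by omega)]
        have pe0 : (2:ℚ)^(2*(k+1)) = 2^(2*k-1)*8 := by
          conv_lhs => rw [show 2*(k+1) = (2*k-1)+3 by omega]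
          rw [pow_add]; norm_num
        have pe2 : (2:ℚ)^(2*k) = 2^(2*k-1)*2 := by
          conv_lhs => rw [show 2*k = (2*k-1)+1 by omega]
          rw [pow_succ]
        have hne2 : (2:ℚ)^(2*k-1) ≠ 0 := by positivity
        have hA : (((2*(k+1)-2*(m+1)).choose (k+1)) : ℚ)
            = (2*(2*(k:ℚ)+1-2*((m:ℚ)+1)) * (((2*k-2*(m+1)).choose k : ℚ))
                + 2*((m:ℚ)+1) * (((2*k+1-2*(m+1)).choose k : ℚ)))/((k:ℚ)+1) := by
          rw [eq_div_iff (by positivity), show 2*(k+1)-2*(m+1) = 2*k+2-2*(m+1) by omega]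
          have hb := keyB k (m+1) h2
          push_cast at hb
          linear_combination hb
        rw [hA, pe0, pe2, fe2, show 2*k-2*m-1 = 2*k+1-2*(m+1) by omega]
        push_cast
        field_simp
        try ring
      · by_cases h1 : 2*(m+1) ≤ k+1
        · -- 2(m+1) = k+1
          rw [if_pos h1, if_neg h2, if_pos (show 2*m < k by omega)]
          have hk : k = 2*m+1 := by omega
          subst hk
          rw [show 2*(2*m+1+1)-2*(m+1) = 2*m+1+1 by omega, Nat.choose_self,
              show 2*(2*m+1)-2*m-1 = 2*m+1 by omega, Nat.choose_self]
          have pe0 : (2:ℚ)^(2*(2*m+1+1)) = 2^(4*m+1)*8 := by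
            conv_lhs => rw [show 2*(2*m+1+1) = (4*m+1)+3 by omega]
            rw [pow_add]; norm_num
          have pe1 : (2:ℚ)^(2*(2*m+1)-1) = 2^(4*m+1) := by
            rw [show 2*(2*m+1)-1 = 4*m+1 by omega]
          have hne2 : (2:ℚ)^(4*m+1) ≠ 0 := by positivity
          rw [pe0, pe1, fe2]
          push_cast
          field_simp
          try ring
        · rw [if_neg h1, if_neg h2, if_neg (show ¬ 2*m < k by omega)]; ring
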